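/- Let V be the set of 2-element subsets of ℚ, with E = {(x,y) ∈ V² : |x ∩ y| = 1} and N = {(x,y) ∈ V² : x ∩ y = ∅}. Let e : V → V be a map such that |x ∩ y| = 1 implies |e(x) ∩ e(y)| = 1 and x ∩ y = ∅ implies e(x) ∩ e(y) = ∅. Then for every finite subset F of V there exists a permutation β of ℚ such that e(x) = {β(a), β(b)} for every x = {a,b} ∈ F. (In other words, the structure (V; E, N) is a model-complete core: its endomorphisms are pointwise limits of its automorphisms.) -/

import Mathlib

/-- The vertex set of the Johnson graph: 2-element subsets of ℚ. -/
abbrev JVert : Type := {s : Finset ℚ // s.card = 2}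

-- H1
lemma H1 {X Y : Finset ℚ} (h : (X ∩ Y).card = 1) :
    ∃ p, p ∈ X ∧ p ∈ Y ∧ ∀ q, q ∈ X → q ∈ Y → q = p := by
  obtain ⟨p, hp⟩ := Finset.card_eq_one.mp h
  refine ⟨p, ?_, ?_, ?_⟩
  · have : p ∈ X ∩ Y := hp ▸ Finset.mem_singleton_self p
    exact (Finset.mem_inter.mp this).1
  · have : p ∈ X ∩ Y := hp ▸ Finset.mem_singleton_self p
    exact (Finset.mem_inter.mp this).2
  · intro q hqX hqY
    have : q ∈ X ∩ Y := Finset.mem_inter.mpr ⟨hqX, hqY⟩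
    rw [hp, Finset.mem_singleton] at this
    exact this

-- H2
lemma H2 {X : Finset ℚ} (hX : X.card = 2) {p : ℚ} (hp : p ∈ X) :
    ∃ x, x ≠ p ∧ X = {p, x} := by
  obtain ⟨a, b, hab, rfl⟩ := Finset.card_eq_two.mp hX
  rcases Finset.mem_insert.mp hp with rfl | hp'
  · exact ⟨b, hab.symm, rfl⟩
  · rw [Finset.mem_singleton] at hp'
    subst hp'
    exact ⟨a, hab, Finset.pair_comm a p⟩

-- four-set lemma
lemma four {X Y Z W : Finset ℚ} (hX : X.card = 2) (hY : Y.card = 2) (hZ : Z.card = 2)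
    (hW : W.card = 2)
    (hXY : (X ∩ Y).card = 1) (hXZ : (X ∩ Z).card = 1) (hYZ : (Y ∩ Z).card = 1)
    (hXW : (X ∩ W).card = 1) (hYW : (Y ∩ W).card = 1) (hZW : (Z ∩ W).card = 1)
    {p : ℚ} (hpX : p ∈ X) (hpY : p ∈ Y) : p ∈ W := by
  obtain ⟨p', hp'X, hp'Y, hXYu⟩ := H1 hXY
  obtain rfl : p = p' := hXYu p hpX hpY
  by_cases hpZ : p ∈ Z
  · by_contra hpW
    obtain ⟨x, hxp, hXe⟩ := H2 hX hp'X
    obtain ⟨y, hyp, hYe⟩ := H2 hY hp'Y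
    have hxX : x ∈ X := by rw [hXe]; simp
    have hyY : y ∈ Y := by rw [hYe]; simp
    have hxy : x ≠ y := by
      intro h
      exact hxp (hXYu x hxX (h ▸ hyY))
    -- x ∈ W
    obtain ⟨u, huX, huW, _⟩ := H1 hXW
    have hup : u ≠ p := fun h => hpW (h ▸ huW)
    have hux : u = x := by
      rw [hXe] at huX
      rcases Finset.mem_insert.mp huX with h | h
      · exact absurd h hup
      · exact Finset.mem_singleton.mp h
    have hxW : x ∈ W := hux ▸ huW
    obtain ⟨v, hvY, hvW, _⟩ := H1 hYW
    have hvp : v ≠ p := fun h => hpW (h ▸ hvW)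
    have hvy : v = y := by
      rw [hYe] at hvY
      rcases Finset.mem_insert.mp hvY with h | h
      · exact absurd h hvp
      · exact Finset.mem_singleton.mp h
    have hyW : y ∈ W := hvy ▸ hvW
    have hWe : W = {x, y} := by
      have hsub : ({x, y} : Finset ℚ) ⊆ W := by
        intro t ht
        rcases Finset.mem_insert.mp ht with rfl | ht
        · exact hxW
        · exact (Finset.mem_singleton.mp ht) ▸ hyW
      have := Finset.eq_of_subset_of_card_le hsub (by rw [Finset.card_pair hxy, hW])
      exact this.symm
    -- Z
    obtain ⟨z, hzp, hZe⟩ := H2 hZ hpZ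
    obtain ⟨w, hwZ, hwW, _⟩ := H1 hZW
    have hwp : w ≠ p := fun h => hpW (h ▸ hwW)
    have hwz : w = z := by
      rw [hZe] at hwZ
      rcases Finset.mem_insert.mp hwZ with h | h
      · exact absurd h hwp
      · exact Finset.mem_singleton.mp h
    have hzW : z ∈ W := hwz ▸ hwW
    rw [hWe] at hzW
    rcases Finset.mem_insert.mp hzW with rfl | hzW
    · -- z = x, so Z = X
      have : Z = X := by rw [hZe, hXe]
      rw [this, Finset.inter_self, hX] at hXZ
      exact absurd hXZ (by norm_num)
    · have : z = y := Finset.mem_singleton.mp hzW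
      subst this
      have : Z = Y := by rw [hZe, hYe]
      rw [this, Finset.inter_self, hY] at hYZ
      exact absurd hYZ (by norm_num)
  · exfalso
    obtain ⟨c, hcX, hcZ, _⟩ := H1 hXZ
    have hcp : c ≠ p := fun h => hpZ (h ▸ hcZ)
    obtain ⟨d, hdY, hdZ, _⟩ := H1 hYZ
    have hdp : d ≠ p := fun h => hpZ (h ▸ hdZ)
    have hcd : c ≠ d := by
      intro h
      exact hcp (hXYu c hcX (h ▸ hdY))
    have hXe : X = {p, c} := by
      obtain ⟨x, hxp, hXe⟩ := H2 hX hp'X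
      rw [hXe] at hcX
      rcases Finset.mem_insert.mp hcX with h | h
      · exact absurd h hcp
      · rw [hXe, Finset.mem_singleton.mp h]
    have hYe : Y = {p, d} := by
      obtain ⟨y, hyp, hYe⟩ := H2 hY hp'Y
      rw [hYe] at hdY
      rcases Finset.mem_insert.mp hdY with h | h
      · exact absurd h hdp
      · rw [hYe, Finset.mem_singleton.mp h]
    have hZe : Z = {c, d} := by
      have hsub : ({c, d} : Finset ℚ) ⊆ Z := by
        intro t ht
        rcases Finset.mem_insert.mp ht with rfl | ht
        · exact hcZ
        · exact (Finset.mem_singleton.mp ht) ▸ hdZ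
      exact (Finset.eq_of_subset_of_card_le hsub (by rw [Finset.card_pair hcd, hZ])).symm
    by_cases hpW : p ∈ W
    · obtain ⟨w, hwp, hWe⟩ := H2 hW hpW
      obtain ⟨v, hvZ, hvW, _⟩ := H1 hZW
      have hvp : v ≠ p := fun h => hpZ (h ▸ hvZ)
      have hvw : v = w := by
        rw [hWe] at hvW
        rcases Finset.mem_insert.mp hvW with h | h
        · exact absurd h hvp
        · exact Finset.mem_singleton.mp h
      subst hvw
      rw [hZe] at hvZ
      rcases Finset.mem_insert.mp hvZ with rfl | hvZ
      · have : W = X := by rw [hWe, hXe]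
        rw [this, Finset.inter_self, hX] at hXW
        exact absurd hXW (by norm_num)
      · have : v = d := Finset.mem_singleton.mp hvZ
        subst this
        have : W = Y := by rw [hWe, hYe]
        rw [this, Finset.inter_self, hY] at hYW
        exact absurd hYW (by norm_num)
    · obtain ⟨u, huX, huW, _⟩ := H1 hXW
      have hup : u ≠ p := fun h => hpW (h ▸ huW)
      have hux : u = c := by
        rw [hXe] at huX
        rcases Finset.mem_insert.mp huX with h | h
        · exact absurd h hup
        · exact Finset.mem_singleton.mp h
      have hcW : c ∈ W := hux ▸ huW
      obtain ⟨v, hvY, hvW, _⟩ := H1 hYW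
      have hvp : v ≠ p := fun h => hpW (h ▸ hvW)
      have hvd : v = d := by
        rw [hYe] at hvY
        rcases Finset.mem_insert.mp hvY with h | h
        · exact absurd h hvp
        · exact Finset.mem_singleton.mp h
      have hdW : d ∈ W := hvd ▸ hvW
      have hWe : W = {c, d} := by
        have hsub : ({c, d} : Finset ℚ) ⊆ W := by
          intro t ht
          rcases Finset.mem_insert.mp ht with rfl | ht
          · exact hcW
          · exact (Finset.mem_singleton.mp ht) ▸ hdW
        exact (Finset.eq_of_subset_of_card_le hsub (by rw [Finset.card_pair hcd, hW])).symm
      have : W = Z := by rw [hWe, hZe]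
      rw [this, Finset.inter_self, hZ] at hZW
      exact absurd hZW (by norm_num)


def jpair (a b : ℚ) (h : a ≠ b) : JVert := ⟨{a, b}, Finset.card_pair h⟩

lemma inter_pair {a b c : ℚ} (hbc : b ≠ c) :
    ({a, b} : Finset ℚ) ∩ {a, c} = {a} ∪ ({b} ∩ {c}) := by
  ext t
  simp only [Finset.mem_inter, Finset.mem_insert, Finset.mem_singleton, Finset.mem_union]
  constructor
  · rintro ⟨h1 | h1, h2 | h2⟩ <;> simp_all
  · rintro (rfl | ⟨rfl, rfl⟩) <;> simp_all

lemma inter_pair' {a b c : ℚ} (hbc : b ≠ c) :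
    (({a, b} : Finset ℚ) ∩ {a, c}).card = 1 := by
  rw [inter_pair hbc]
  have : ({b} : Finset ℚ) ∩ {c} = ∅ := by
    simp [Finset.eq_empty_iff_forall_notMem, hbc]
  rw [this]
  simp

lemma disj_pair {a b c d : ℚ} (hab : a ≠ b) (had : a ≠ d) (hcb : c ≠ b) (hcd : c ≠ d) :
    ({a, c} : Finset ℚ) ∩ {b, d} = ∅ := by
  ext t
  simp only [Finset.mem_inter, Finset.mem_insert, Finset.mem_singleton,
    Finset.notMem_empty, iff_false]
  rintro ⟨rfl | rfl, h2 | h2⟩ <;> simp_all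

lemma star (e : JVert → JVert)
    (heE : ∀ x y : JVert, (x.1 ∩ y.1).card = 1 → ((e x).1 ∩ (e y).1).card = 1) :
    ∃ f : ℚ → ℚ, ∀ (a b : ℚ) (h : a ≠ b), f a ∈ (e (jpair a b h)).1 := by
  have key : ∀ a : ℚ, ∃ p : ℚ, ∀ (b : ℚ) (h : a ≠ b), p ∈ (e (jpair a b h)).1 := by
    intro a
    have h1 : a ≠ a + 1 := by intro h; linarith [h]
    have h2 : a ≠ a + 2 := by intro h; linarith [h]
    have h12 : a + 1 ≠ a + 2 := by intro h; linarith [h]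
    set X := e (jpair a (a + 1) h1) with hXdef
    set Y := e (jpair a (a + 2) h2) with hYdef
    have hXY : (X.1 ∩ Y.1).card = 1 := heE _ _ (inter_pair' h12)
    obtain ⟨p, hpX, hpY, _⟩ := H1 hXY
    refine ⟨p, fun b hb => ?_⟩
    by_cases hb1 : b = a + 1
    · subst hb1; exact hpX
    by_cases hb2 : b = a + 2
    · subst hb2; exact hpY
    obtain ⟨c, hc⟩ := Infinite.exists_notMem_finset ({a, a + 1, a + 2, b} : Finset ℚ)
    simp only [Finset.mem_insert, Finset.mem_singleton, not_or] at hc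
    obtain ⟨hca, hc1, hc2, hcb⟩ := hc
    have hac : a ≠ c := fun h => hca h.symm
    set Z := e (jpair a c hac) with hZdef
    set W := e (jpair a b hb) with hWdef
    refine four X.2 Y.2 Z.2 W.2 hXY (heE _ _ ?_) (heE _ _ ?_) (heE _ _ ?_)
      (heE _ _ ?_) (heE _ _ ?_) hpX hpY
    · exact inter_pair' (fun h => hc1 h.symm)
    · exact inter_pair' (fun h => hc2 h.symm)
    · exact inter_pair' (fun h => hb1 h.symm)
    · exact inter_pair' (fun h => hb2 h.symm)
    · exact inter_pair' hcb
  choose f hf using key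
  exact ⟨f, hf⟩

lemma main_lemma (e : JVert → JVert)
    (heE : ∀ x y : JVert, (x.1 ∩ y.1).card = 1 → ((e x).1 ∩ (e y).1).card = 1)
    (heN : ∀ x y : JVert, x.1 ∩ y.1 = ∅ → (e x).1 ∩ (e y).1 = ∅) :
    ∃ f : ℚ → ℚ, Function.Injective f ∧
      ∀ (a b : ℚ) (h : a ≠ b), (e (jpair a b h)).1 = {f a, f b} := by
  obtain ⟨f, hf⟩ := star e heE
  have finj : Function.Injective f := by
    intro a b hab
    by_contra hne
    obtain ⟨c, hc⟩ := Infinite.exists_notMem_finset ({a, b} : Finset ℚ)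
    obtain ⟨d, hd⟩ := Infinite.exists_notMem_finset ({a, b, c} : Finset ℚ)
    simp only [Finset.mem_insert, Finset.mem_singleton, not_or] at hc hd
    have hac : a ≠ c := fun h => hc.1 h.symm
    have hbd : b ≠ d := fun h => hd.2.1 h.symm
    have hdisj : ({a, c} : Finset ℚ) ∩ {b, d} = ∅ :=
      disj_pair hne (fun h => hd.1 h.symm) hc.2 (fun h => hd.2.2 h.symm)
    have := heN (jpair a c hac) (jpair b d hbd) hdisj
    have h1 : f a ∈ (e (jpair a c hac)).1 := hf a c hac
    have h2 : f b ∈ (e (jpair b d hbd)).1 := hf b d hbd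
    rw [hab] at h1
    have : f b ∈ (e (jpair a c hac)).1 ∩ (e (jpair b d hbd)).1 :=
      Finset.mem_inter.mpr ⟨h1, h2⟩
    rw [‹(e (jpair a c hac)).1 ∩ (e (jpair b d hbd)).1 = ∅›] at this
    simp at this
  refine ⟨f, finj, fun a b h => ?_⟩
  have h1 : f a ∈ (e (jpair a b h)).1 := hf a b h
  have hpc : jpair a b h = jpair b a h.symm := Subtype.ext (Finset.pair_comm a b)
  have h2 : f b ∈ (e (jpair a b h)).1 := by rw [hpc]; exact hf b a h.symm
  have hfab : f a ≠ f b := fun hh => h (finj hh)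
  have hsub : ({f a, f b} : Finset ℚ) ⊆ (e (jpair a b h)).1 := by
    intro t ht
    rcases Finset.mem_insert.mp ht with rfl | ht
    · exact h1
    · exact (Finset.mem_singleton.mp ht) ▸ h2
  exact (Finset.eq_of_subset_of_card_le hsub
    (by rw [Finset.card_pair hfab, (e (jpair a b h)).2])).symm

lemma extend_perm (f : ℚ → ℚ) (finj : Function.Injective f) (S : Finset ℚ) :
    ∃ β : Equiv.Perm ℚ, ∀ a ∈ S, β a = f a := by
  classical
  set s : Set ℚ := ↑S with hs
  have hsf : s.Finite := S.finite_toSet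
  have htf : (f '' s).Finite := hsf.image f
  haveI : Infinite ↥(sᶜ) := hsf.infinite_compl.to_subtype
  haveI : Infinite ↥((f '' s)ᶜ) := htf.infinite_compl.to_subtype
  obtain ⟨d1⟩ := nonempty_denumerable ↥(sᶜ)
  obtain ⟨d2⟩ := nonempty_denumerable ↥((f '' s)ᶜ)
  have e₁ : ↥(sᶜ) ≃ ↥((f '' s)ᶜ) := (@Denumerable.eqv _ d1).trans (@Denumerable.eqv _ d2).symm
  set e₀ : ↥s ≃ ↥(f '' s) := Equiv.Set.image f s finj with he₀
  obtain ⟨β, hβ⟩ := (Equiv.Set.compl e₀).symm e₁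
  refine ⟨β, fun a ha => ?_⟩
  have := hβ ⟨a, by exact_mod_cast ha⟩
  simpa [he₀, Equiv.Set.image, Equiv.Set.imageOfInjOn] using this

/-- If `e` preserves the edge relation `E` and the non-edge relation `N` of the Johnson
graph, then on every finite subset `F` of the vertices, `e` agrees with the map induced by a
permutation `β` of ℚ: `(V; E, N)` is a model-complete core. -/
theorem johnson_with_nonedges_core (e : JVert → JVert)
    (heE : ∀ x y : JVert, (x.1 ∩ y.1).card = 1 → ((e x).1 ∩ (e y).1).card = 1)
    (heN : ∀ x y : JVert, x.1 ∩ y.1 = ∅ → (e x).1 ∩ (e y).1 = ∅)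
    (F : Finset JVert) :
    ∃ β : Equiv.Perm ℚ, ∀ x ∈ F, (e x).1 = x.1.image β := by
  obtain ⟨f, finj, hval⟩ := main_lemma e heE heN
  obtain ⟨β, hβ⟩ := extend_perm f finj (F.biUnion (fun x => x.1))
  refine ⟨β, fun x hx => ?_⟩
  obtain ⟨a, b, hab, hx1⟩ := Finset.card_eq_two.mp x.2
  have hxe : x = jpair a b hab := Subtype.ext hx1
  have haS : a ∈ F.biUnion (fun x => x.1) :=
    Finset.mem_biUnion.mpr ⟨x, hx, by rw [hx1]; simp⟩
  have hbS : b ∈ F.biUnion (fun x => x.1) :=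
    Finset.mem_biUnion.mpr ⟨x, hx, by rw [hx1]; simp⟩
  rw [hxe, hval a b hab]
  show ({f a, f b} : Finset ℚ) = Finset.image β {a, b}
  simp [Finset.image_insert, hβ a haS, hβ b hbS]
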